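/- Let S be a finite type, let p₁ be a pmf on S, and fix t₀ : ℝ. For each a : S let P a : ℝ → S → ℝ be a family of functions and u a : S → S → ℝ be such that for every y : S the function t ↦ P a t y has derivative at t₀ equal to ∑_{x} u a y x * P a t₀ x. Define the marginal m t y = ∑_{a} p₁ a * P a t y and assume m t₀ x > 0 for all x : S. Define the posterior π a x = p₁ a * P a t₀ x / m t₀ x and the marginal velocity U y x = ∑_{a} u a y x * π a x. Then for every y : S, the function t ↦ m t y has derivative at t₀ equal to ∑_{x} U y x * m t₀ x. -/

import Mathlib

/-- Marginal velocity identity of discrete flow matching: if each conditional path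
`t ↦ P a t ·` satisfies the Kolmogorov forward equation with conditional velocity
`u a` at `t₀`, then the mixture path `m t = ∑ a, p₁ a * P a t ·` satisfies the forward
equation at `t₀` with the posterior-averaged velocity `U y x = ∑ a, u a y x * π a x`,
where `π a x = p₁ a * P a t₀ x / m t₀ x` is the posterior. -/
theorem marginal_velocity_identity {S : Type*} [Fintype S]
    (p₁ : S → ℝ) (hp_nonneg : ∀ a, 0 ≤ p₁ a) (hp_sum : ∑ a, p₁ a = 1)
    (t₀ : ℝ)
    (P : S → ℝ → S → ℝ) (u : S → S → S → ℝ)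
    (hP : ∀ a y, HasDerivAt (fun t => P a t y) (∑ x, u a y x * P a t₀ x) t₀)
    (m : ℝ → S → ℝ) (hm : ∀ t y, m t y = ∑ a, p₁ a * P a t y)
    (hm_pos : ∀ x, 0 < m t₀ x)
    (post : S → S → ℝ) (hpost : ∀ a x, post a x = p₁ a * P a t₀ x / m t₀ x)
    (U : S → S → ℝ) (hU : ∀ y x, U y x = ∑ a, u a y x * post a x) :
    ∀ y : S, HasDerivAt (fun t => m t y) (∑ x, U y x * m t₀ x) t₀ := by
  intro y
  have key : (∑ x, U y x * m t₀ x) = ∑ a, p₁ a * ∑ x, u a y x * P a t₀ x := by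
    have : ∀ x, U y x * m t₀ x = ∑ a, u a y x * (p₁ a * P a t₀ x) := by
      intro x
      rw [hU, Finset.sum_mul]
      refine Finset.sum_congr rfl fun a _ => ?_
      rw [hpost]
      field_simp
      exact mul_div_cancel_right₀ _ (hm_pos x).ne'
    simp_rw [this, Finset.mul_sum]
    rw [Finset.sum_comm]
    refine Finset.sum_congr rfl fun a _ => Finset.sum_congr rfl fun x _ => by ring
  rw [key]
  have : (fun t => m t y) = fun t => ∑ a, p₁ a * P a t y := by
    funext t; exact hm t y
  rw [this]
  exact HasDerivAt.fun_sum fun a _ => ((hP a y).const_mul (p₁ a))
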